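/- For every non-negative integer n, sum_{m=0}^{n} binom(2m, m) * 4^{n-m} = (2n+1) * binom(2n, n). -/

import Mathlib

theorem central_binomial_partial_sum (n : ℕ) :
    ∑ m ∈ Finset.range (n + 1), Nat.choose (2 * m) m * 4 ^ (n - m) =
      (2 * n + 1) * Nat.choose (2 * n) n := by
  induction n with
  | zero => simp
  | succ n ih =>
    have hsum : ∑ m ∈ Finset.range (n + 1 + 1), Nat.choose (2 * m) m * 4 ^ (n + 1 - m) =
        4 * ((2 * n + 1) * Nat.choose (2 * n) n) + Nat.choose (2 * (n + 1)) (n + 1) := by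
      rw [Finset.sum_range_succ, ← ih, Finset.mul_sum]
      simp only [Nat.sub_self, pow_zero, mul_one]
      congr 1
      apply Finset.sum_congr rfl
      intro m hm
      have hm' : m ≤ n := Nat.lt_succ_iff.mp (Finset.mem_range.mp hm)
      rw [show n + 1 - m = (n - m) + 1 by omega, pow_succ]
      ring
    rw [hsum]
    have key := Nat.succ_mul_centralBinom_succ n
    simp only [Nat.centralBinom] at key
    apply Nat.eq_of_mul_eq_mul_left (show 0 < n + 1 by omega)
    have h2 : (n + 1) * Nat.choose (2 * (n + 1)) (n + 1) =
        2 * (2 * n + 1) * Nat.choose (2 * n) n := key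
    calc (n + 1) * (4 * ((2 * n + 1) * Nat.choose (2 * n) n) + Nat.choose (2 * (n + 1)) (n + 1))
        = 4 * (n + 1) * ((2 * n + 1) * Nat.choose (2 * n) n) +
            (n + 1) * Nat.choose (2 * (n + 1)) (n + 1) := by ring
      _ = 4 * (n + 1) * ((2 * n + 1) * Nat.choose (2 * n) n) +
            2 * (2 * n + 1) * Nat.choose (2 * n) n := by rw [h2]
      _ = (2 * n + 3) * (2 * (2 * n + 1) * Nat.choose (2 * n) n) := by ring
      _ = (2 * n + 3) * ((n + 1) * Nat.choose (2 * (n + 1)) (n + 1)) := by rw [h2]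
      _ = (n + 1) * ((2 * (n + 1) + 1) * Nat.choose (2 * (n + 1)) (n + 1)) := by ring
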